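/- Under the dummy-encoding setup, the Shapley value of X computed by treating (Z_1,...,Z_{K−1}) as a single coalesced variable equals the Shapley value of X in the original model: φ_X(f̃; Z_{1:K−1}) = φ_X(f). -/
import Mathlib


open MeasureTheory ProbabilityTheory

/-- Dummy encoding of a categorical value `z ∈ {1,…,K}` into `K-1` indicator
variables: `(dummyEnc K z) j = 1_{z = j}`. -/
def dummyEnc (K : ℕ) (z : Fin K) : Fin (K - 1) → Bool := fun j => decide (z.val = j.val)


lemma dummyEnc_injective (K : ℕ) : Function.Injective (dummyEnc K) := by
  intro a b h
  have hab : ∀ j : Fin (K-1), (a.val = j.val) ↔ (b.val = j.val) := by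
    intro j
    have := congrFun h j
    simpa [dummyEnc, decide_eq_decide] using this
  rcases lt_or_ge a.val (K-1) with ha | ha
  · exact Fin.ext ((hab ⟨a.val, ha⟩).mp rfl).symm
  · rcases lt_or_ge b.val (K-1) with hb | hb
    · exact Fin.ext ((hab ⟨b.val, hb⟩).mpr rfl)
    · have := a.isLt; have := b.isLt
      exact Fin.ext (by omega)

/-- The Shapley value of `X` computed by treating the dummy block
`(Z_1,…,Z_{K-1})` as a single coalesced variable equals the Shapley value of
`X` in the original model: `φ_X(f̃; Z_{1:K-1}) = φ_X(f)`. -/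
theorem shapley_X_coalesced_dummies_eq_original
    {Ω : Type*} [MeasurableSpace Ω] (μ : Measure Ω) [IsProbabilityMeasure μ]
    (K : ℕ) (X : Ω → ℝ) (Z : Ω → Fin K) (hX : Measurable X) (hZ : Measurable Z)
    (f : ℝ → Fin K → ℝ) (ftilde : ℝ → (Fin (K - 1) → Bool) → ℝ)
    (hf : ∀ a b, f a b = ftilde a (dummyEnc K b))
    (x : ℝ) (z : Fin K)
    (hx : μ {ω | X ω = x} ≠ 0) (hz : μ {ω | Z ω = z} ≠ 0) :
    ((1 : ℝ) / 2) * ((∫ ω, ftilde (X ω) (dummyEnc K (Z ω))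
          ∂(ProbabilityTheory.cond μ {ω | X ω = x})) -
        ∫ ω, ftilde (X ω) (dummyEnc K (Z ω)) ∂μ) +
      ((1 : ℝ) / 2) * (ftilde x (dummyEnc K z) -
        ∫ ω, ftilde (X ω) (dummyEnc K (Z ω))
          ∂(ProbabilityTheory.cond μ {ω | dummyEnc K (Z ω) = dummyEnc K z})) =
    ((1 : ℝ) / 2) * ((∫ ω, f (X ω) (Z ω)
          ∂(ProbabilityTheory.cond μ {ω | X ω = x})) -
        ∫ ω, f (X ω) (Z ω) ∂μ) +
      ((1 : ℝ) / 2) * (f x z -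
        ∫ ω, f (X ω) (Z ω) ∂(ProbabilityTheory.cond μ {ω | Z ω = z})) := by
  have hset : {ω | dummyEnc K (Z ω) = dummyEnc K z} = {ω | Z ω = z} := by
    ext ω
    exact ⟨fun h => dummyEnc_injective K h, fun h => by simp only [Set.mem_setOf_eq] at h ⊢; rw [h]⟩
  simp only [hf, hset]
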